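/- Let G be the Cantor function, define g : [0, 2π] → [0, 1] by g(x) := G(x/(2π)), let I_g(x) := ∫₀ˣ g(t) dt, and let S_g(x) := I_g(x) − x²/(4π) + π. Then S_g(x) ≥ π for all x ∈ [0, 2π]; S_g(0) = S_g(2π) = π (equivalently, I_g(x) ≥ x²/(4π) on [0, 2π] and I_g(2π) = π); and x ↦ S_g(x) + x²/(4π) is convex on [0, 2π], so S_g is semiconvex. -/

import Mathlib

open Set Metric Filter
open scoped ENNReal NNReal Classical

noncomputable section

/-- `a` is a ternary expansion of `x`: digits in `{0, 1, 2}` (indexed from `0`,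
representing the digit of `3⁻⁽ⁿ⁺¹⁾`) with `x = Σ aₙ 3⁻⁽ⁿ⁺¹⁾`. -/
def IsTernaryExpansion (x : ℝ) (a : ℕ → ℕ) : Prop :=
  (∀ n, a n ≤ 2) ∧ x = ∑' n : ℕ, (a n : ℝ) / 3 ^ (n + 1)

/-- The value of the Cantor function computed from a ternary digit sequence `a`
(`a n` is the digit of `3⁻⁽ⁿ⁺¹⁾`): if `N` is the position of the first digit `1`
(1-based), the value is `2⁻ᴺ + (1/2) Σ_{n<N} aₙ 2⁻ⁿ`; if no digit equals `1`, the value is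
`(1/2) Σₙ aₙ 2⁻ⁿ`. -/
def cantorVal (a : ℕ → ℕ) : ℝ :=
  if h : ∃ n, a n = 1 then
    (1 : ℝ) / 2 ^ (Nat.find h + 1) +
      (1 / 2) * ∑ n ∈ Finset.range (Nat.find h), (a n : ℝ) / 2 ^ (n + 1)
  else (1 / 2) * ∑' n : ℕ, (a n : ℝ) / 2 ^ (n + 1)

open intervalIntegral

-- summability
lemma summable_base (b : ℝ) (hb : 1 < b) (a : ℕ → ℕ) (ha : ∀ n, a n ≤ 2) :
    Summable (fun n : ℕ => (a n : ℝ) / b ^ (n + 1)) := by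
  have h0 : (0:ℝ) < b := lt_trans one_pos hb
  have hg : Summable (fun n : ℕ => 2 * (1/b) ^ n) := by
    apply Summable.mul_left
    exact summable_geometric_of_lt_one (by positivity) (by rw [div_lt_one h0]; exact hb)
  have hnn : ∀ n : ℕ, (0:ℝ) ≤ (a n : ℝ) / b ^ (n + 1) := fun n => by positivity
  have hle : ∀ n : ℕ, (a n : ℝ) / b ^ (n + 1) ≤ 2 * (1/b) ^ n := by
    intro n
    rw [div_eq_mul_inv, ← inv_pow]
    have h1 : (a n : ℝ) ≤ 2 := by exact_mod_cast ha n
    have hinv : (0:ℝ) ≤ b⁻¹ := by positivity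
    have h2 : (b⁻¹ : ℝ) ^ (n+1) ≤ b⁻¹ ^ n := by
      apply pow_le_pow_of_le_one hinv (by rw [inv_le_one_iff₀]; right; linarith) (by omega)
    have h3 : (a n : ℝ) * (b⁻¹)^(n+1) ≤ 2 * b⁻¹ ^ (n+1) :=
      mul_le_mul_of_nonneg_right h1 (by positivity)
    have h4 : (2:ℝ) * b⁻¹ ^ (n+1) ≤ 2 * b⁻¹ ^ n := by linarith
    calc (a n : ℝ) * (b⁻¹)^(n+1) ≤ 2 * b⁻¹ ^ n := le_trans h3 h4
      _ = 2 * (1/b)^n := by rw [one_div]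
  exact Summable.of_nonneg_of_le hnn hle hg

lemma tsum_two_base : (∑' n : ℕ, (2 : ℝ) / 2 ^ (n + 1)) = 2 := by
  have : (fun n : ℕ => (2:ℝ) / 2 ^ (n+1)) = fun n : ℕ => (1/2)^n := by
    funext n; rw [div_pow, one_pow, pow_succ]; ring
  rw [this, tsum_geometric_of_lt_one (by norm_num) (by norm_num)]; norm_num

lemma sum_le_tsum_base (a : ℕ → ℕ) (ha : ∀ n, a n ≤ 2) :
    (∑' n : ℕ, (a n : ℝ) / 2 ^ (n + 1)) ≤ 2 := by
  have key : (∑' n : ℕ, (a n : ℝ) / 2 ^ (n + 1)) ≤ ∑' n : ℕ, (2:ℝ) / 2 ^ (n+1) := by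
    apply Summable.tsum_le_tsum _ (summable_base 2 one_lt_two a ha)
    · apply (summable_base 2 one_lt_two (fun _ => 2) (fun _ => le_refl 2)).congr
      intro n; norm_num
    · intro n
      apply div_le_div_of_nonneg_right (by exact_mod_cast ha n) (by positivity)
  rw [tsum_two_base] at key; exact key

def tcons (d : ℕ) (a : ℕ → ℕ) : ℕ → ℕ := fun n => match n with
  | 0 => d
  | n+1 => a n

lemma tcons_le (d : ℕ) (hd : d ≤ 2) (a : ℕ → ℕ) (ha : ∀ n, a n ≤ 2) :
    ∀ n, tcons d a n ≤ 2 := by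
  intro n; cases n with
  | zero => exact hd
  | succ n => exact ha n

lemma tsum_tcons (b : ℝ) (hb : 1 < b) (d : ℕ) (hd : d ≤ 2) (a : ℕ → ℕ) (ha : ∀ n, a n ≤ 2) :
    (∑' n : ℕ, (tcons d a n : ℝ) / b ^ (n + 1)) =
      d / b + (1/b) * ∑' n : ℕ, (a n : ℝ) / b ^ (n + 1) := by
  have hs := summable_base b hb (tcons d a) (tcons_le d hd a ha)
  rw [Summable.tsum_eq_zero_add hs]
  congr 1
  · simp [tcons]
  · have : ∀ n : ℕ, (tcons d a (n+1) : ℝ) / b ^ (n + 1 + 1) = (1/b) * ((a n : ℝ) / b ^ (n+1)) := by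
      intro n
      show (a n : ℝ) / b ^ (n + 2) = _
      rw [pow_succ]
      ring
    rw [tsum_congr this, tsum_mul_left]

lemma isTernary_cons (x : ℝ) (a : ℕ → ℕ) (d : ℕ) (hd : d ≤ 2)
    (h : IsTernaryExpansion x a) : IsTernaryExpansion ((d + x)/3) (tcons d a) := by
  obtain ⟨ha, hx⟩ := h
  refine ⟨tcons_le d hd a ha, ?_⟩
  rw [tsum_tcons 3 (by norm_num) d hd a ha, ← hx]
  ring

lemma cantorVal_cons_one (a : ℕ → ℕ) : cantorVal (tcons 1 a) = 1/2 := by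
  have h : ∃ n, tcons 1 a n = 1 := ⟨0, rfl⟩
  rw [cantorVal, dif_pos h]
  have hf : Nat.find h = 0 := by
    rw [Nat.find_eq_zero]; rfl
  rw [hf]; simp

lemma cantorVal_cons_zero (a : ℕ → ℕ) (ha : ∀ n, a n ≤ 2) :
    cantorVal (tcons 0 a) = cantorVal a / 2 := by
  by_cases h : ∃ n, a n = 1
  · have h' : ∃ n, tcons 0 a n = 1 := ⟨Nat.find h + 1, by simpa [tcons] using Nat.find_spec h⟩
    have hf : Nat.find h' = Nat.find h + 1 := by
      rw [Nat.find_eq_iff]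
      constructor
      · simpa [tcons] using Nat.find_spec h
      · intro m hm
        cases m with
        | zero => simp [tcons]
        | succ k =>
          have : k < Nat.find h := by omega
          simpa [tcons] using Nat.find_min h this
    rw [cantorVal, cantorVal, dif_pos h, dif_pos h', hf]
    rw [Finset.sum_range_succ']
    simp only [tcons]
    have : ∀ i ∈ Finset.range (Nat.find h),
        (a i : ℝ) / 2 ^ (i + 1 + 1) = (1/2) * ((a i : ℝ) / 2 ^ (i+1)) := by
      intro i _; rw [pow_succ]; ring
    rw [Finset.sum_congr rfl this, ← Finset.mul_sum]
    push_cast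
    rw [pow_succ]
    field_simp
    ring
  · have h' : ¬ ∃ n, tcons 0 a n = 1 := by
      rintro ⟨n, hn⟩
      cases n with
      | zero => simp [tcons] at hn
      | succ k => exact h ⟨k, hn⟩
    rw [cantorVal, cantorVal, dif_neg h, dif_neg h']
    rw [tsum_tcons 2 one_lt_two 0 (by norm_num) a ha]
    push_cast
    ring

lemma cantorVal_cons_two (a : ℕ → ℕ) (ha : ∀ n, a n ≤ 2) :
    cantorVal (tcons 2 a) = 1/2 + cantorVal a / 2 := by
  by_cases h : ∃ n, a n = 1
  · have h' : ∃ n, tcons 2 a n = 1 := ⟨Nat.find h + 1, by simpa [tcons] using Nat.find_spec h⟩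
    have hf : Nat.find h' = Nat.find h + 1 := by
      rw [Nat.find_eq_iff]
      constructor
      · simpa [tcons] using Nat.find_spec h
      · intro m hm
        cases m with
        | zero => simp [tcons]
        | succ k =>
          have : k < Nat.find h := by omega
          simpa [tcons] using Nat.find_min h this
    rw [cantorVal, cantorVal, dif_pos h, dif_pos h', hf]
    rw [Finset.sum_range_succ']
    simp only [tcons]
    have : ∀ i ∈ Finset.range (Nat.find h),
        (a i : ℝ) / 2 ^ (i + 1 + 1) = (1/2) * ((a i : ℝ) / 2 ^ (i+1)) := by
      intro i _; rw [pow_succ]; ring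
    rw [Finset.sum_congr rfl this, ← Finset.mul_sum]
    push_cast
    rw [pow_succ]
    field_simp
    ring
  · have h' : ¬ ∃ n, tcons 2 a n = 1 := by
      rintro ⟨n, hn⟩
      cases n with
      | zero => simp [tcons] at hn
      | succ k => exact h ⟨k, hn⟩
    rw [cantorVal, cantorVal, dif_neg h, dif_neg h']
    rw [tsum_tcons 2 one_lt_two 2 (by norm_num) a ha]
    push_cast
    ring

lemma cantorVal_nonneg (a : ℕ → ℕ) (ha : ∀ n, a n ≤ 2) : 0 ≤ cantorVal a := by
  rw [cantorVal]
  split_ifs with h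
  · have : (0:ℝ) ≤ ∑ n ∈ Finset.range (Nat.find h), (a n : ℝ) / 2 ^ (n + 1) :=
      Finset.sum_nonneg (fun n _ => by positivity)
    positivity
  · have : (0:ℝ) ≤ ∑' n : ℕ, (a n : ℝ) / 2 ^ (n + 1) :=
      tsum_nonneg (fun n => by positivity)
    positivity

lemma cantorVal_le_one (a : ℕ → ℕ) (ha : ∀ n, a n ≤ 2) : cantorVal a ≤ 1 := by
  rw [cantorVal]
  split_ifs with h
  · set N := Nat.find h
    have hsum : ∑ n ∈ Finset.range N, (a n : ℝ) / 2 ^ (n + 1)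
        ≤ ∑ n ∈ Finset.range N, (2:ℝ) / 2 ^ (n + 1) := by
      apply Finset.sum_le_sum
      intro n _
      apply div_le_div_of_nonneg_right (by exact_mod_cast ha n) (by positivity)
    have hgeo : ∑ n ∈ Finset.range N, (2:ℝ) / 2 ^ (n + 1) = 2 * (1 - (1/2)^N) := by
      have : ∀ n ∈ Finset.range N, (2:ℝ) / 2 ^ (n + 1) = (1/2)^n := by
        intro n _; rw [div_pow, one_pow, pow_succ]; ring
      rw [Finset.sum_congr rfl this, geom_sum_eq (by norm_num)]
      ring
    have hp : (0:ℝ) < (1/2)^N := by positivity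
    have hp2 : (1:ℝ) / 2 ^ (N + 1) = (1/2) * (1/2)^N := by
      rw [pow_succ, div_pow, one_pow]; ring
    rw [hp2]
    nlinarith [hsum, hgeo]
  · have := sum_le_tsum_base a ha
    linarith

def dig (y : ℝ) (n : ℕ) : ℕ := (⌊3^(n+1)*y⌋ - 3*⌊3^n*y⌋).toNat

lemma dig_bounds (y : ℝ) (hy : 0 ≤ y) (n : ℕ) :
    (0:ℤ) ≤ ⌊3^(n+1)*y⌋ - 3*⌊3^n*y⌋ ∧ ⌊3^(n+1)*y⌋ - 3*⌊3^n*y⌋ ≤ 2 := by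
  set z : ℝ := 3^n * y with hz
  have h1 : (3:ℝ)^(n+1) * y = 3 * z := by rw [hz]; ring
  constructor
  · rw [sub_nonneg, h1]
    apply Int.le_floor.mpr
    push_cast
    nlinarith [Int.floor_le z]
  · have h2 : ⌊3*z⌋ < 3*⌊z⌋ + 3 := by
      apply Int.floor_lt.mpr
      push_cast
      nlinarith [Int.lt_floor_add_one z]
    rw [h1]
    omega

lemma dig_le (y : ℝ) (hy : 0 ≤ y) (n : ℕ) : dig y n ≤ 2 := by
  have := dig_bounds y hy n
  unfold dig
  omega

lemma dig_cast (y : ℝ) (hy : 0 ≤ y) (n : ℕ) :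
    (dig y n : ℝ) = (⌊3^(n+1)*y⌋ : ℝ) - 3*(⌊3^n*y⌋ : ℝ) := by
  have := dig_bounds y hy n
  unfold dig
  rw [← Int.cast_natCast, Int.toNat_of_nonneg this.1]
  push_cast
  ring

lemma dig_partial (y : ℝ) (hy0 : 0 ≤ y) (hy1 : y < 1) (N : ℕ) :
    ∑ n ∈ Finset.range N, (dig y n : ℝ) / 3 ^ (n + 1) = (⌊3^N*y⌋ : ℝ) / 3^N := by
  induction N with
  | zero =>
    simp only [Finset.range_zero, Finset.sum_empty, pow_zero, one_mul]
    rw [Int.floor_eq_zero_iff.mpr ⟨hy0, hy1⟩]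
    simp
  | succ N ih =>
    rw [Finset.sum_range_succ, ih, dig_cast y hy0 N]
    have h3 : (3:ℝ)^N ≠ 0 := by positivity
    have h3' : (3:ℝ)^(N+1) ≠ 0 := by positivity
    field_simp
    ring

lemma ternary_of_lt_one (y : ℝ) (hy0 : 0 ≤ y) (hy1 : y < 1) :
    IsTernaryExpansion y (dig y) := by
  refine ⟨dig_le y hy0, ?_⟩
  have hs := summable_base 3 (by norm_num) (dig y) (dig_le y hy0)
  have htend := hs.hasSum.tendsto_sum_nat
  have hbound : ∀ N : ℕ, y - (1/3:ℝ)^N ≤ ∑ n ∈ Finset.range N, (dig y n : ℝ) / 3 ^ (n + 1)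
      ∧ ∑ n ∈ Finset.range N, (dig y n : ℝ) / 3 ^ (n + 1) ≤ y := by
    intro N
    rw [dig_partial y hy0 hy1 N]
    have hp : (0:ℝ) < 3^N := by positivity
    have hf1 : (⌊3^N*y⌋ : ℝ) ≤ 3^N * y := Int.floor_le _
    have hf2 : 3^N * y < (⌊3^N*y⌋ : ℝ) + 1 := Int.lt_floor_add_one _
    constructor
    · have hpow : ((1:ℝ)/3)^N = 1/3^N := by rw [div_pow, one_pow]
      rw [hpow, sub_le_iff_le_add, ← add_div, le_div_iff₀ hp]
      nlinarith
    · rw [div_le_iff₀ hp]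
      linarith
  have h2 : Tendsto (fun N : ℕ => ∑ n ∈ Finset.range N, (dig y n : ℝ) / 3 ^ (n + 1))
      atTop (nhds y) := by
    apply tendsto_of_tendsto_of_tendsto_of_le_of_le
      (g := fun N : ℕ => y - (1/3:ℝ)^N) (h := fun _ => y)
    · have : Tendsto (fun N : ℕ => (1/3:ℝ)^N) atTop (nhds 0) :=
        tendsto_pow_atTop_nhds_zero_of_lt_one (by norm_num) (by norm_num)
      simpa using (tendsto_const_nhds (x := y)).sub this
    · exact tendsto_const_nhds
    · exact fun N => (hbound N).1
    · exact fun N => (hbound N).2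
  exact (tendsto_nhds_unique htend h2).symm

lemma ternary_one : IsTernaryExpansion 1 (fun _ => 2) := by
  refine ⟨fun _ => le_refl 2, ?_⟩
  have : (fun n : ℕ => (2:ℝ) / 3 ^ (n+1)) = fun n : ℕ => (2/3) * (1/3)^n := by
    funext n; rw [pow_succ]; rw [div_pow, one_pow]; ring
  rw [show ((fun _ => 2 : ℕ → ℕ) : ℕ → ℕ) = fun _ => 2 from rfl]
  push_cast
  rw [this, tsum_mul_left, tsum_geometric_of_lt_one (by norm_num) (by norm_num)]
  norm_num

lemma exists_ternary (y : ℝ) (hy : y ∈ Set.Icc (0:ℝ) 1) : ∃ a, IsTernaryExpansion y a := by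
  rcases lt_or_eq_of_le hy.2 with h | h
  · exact ⟨dig y, ternary_of_lt_one y hy.1 h⟩
  · exact ⟨fun _ => 2, h ▸ ternary_one⟩

section GProps
variable {G : ℝ → ℝ}
  (hG : ∀ x ∈ Set.Icc (0:ℝ) 1, ∀ a : ℕ → ℕ, IsTernaryExpansion x a → G x = cantorVal a)
include hG

lemma G_low : ∀ x : ℝ, 0 ≤ x → x ≤ 1/3 → G x = G (3*x)/2 := by
  intro x h0 h1
  obtain ⟨a, ha⟩ := exists_ternary (3*x) ⟨by linarith, by linarith⟩
  have hx : IsTernaryExpansion x (tcons 0 a) := by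
    have h := isTernary_cons (3*x) a 0 (by norm_num) ha
    have : ((0:ℕ):ℝ) = 0 := by norm_num
    rw [this] at h
    convert h using 2
    ring
  rw [hG x ⟨h0, by linarith⟩ _ hx, cantorVal_cons_zero a ha.1,
    hG (3*x) ⟨by linarith, by linarith⟩ a ha]

lemma G_mid : ∀ x : ℝ, 1/3 ≤ x → x ≤ 2/3 → G x = 1/2 := by
  intro x h0 h1
  obtain ⟨a, ha⟩ := exists_ternary (3*x-1) ⟨by linarith, by linarith⟩
  have hx : IsTernaryExpansion x (tcons 1 a) := by
    have h := isTernary_cons (3*x-1) a 1 (by norm_num) ha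
    have he : (((1:ℕ):ℝ) + (3*x-1))/3 = x := by push_cast; ring
    rwa [he] at h
  rw [hG x ⟨by linarith, by linarith⟩ _ hx, cantorVal_cons_one a]

lemma G_high : ∀ x : ℝ, 2/3 ≤ x → x ≤ 1 → G x = 1/2 + G (3*x-2)/2 := by
  intro x h0 h1
  obtain ⟨a, ha⟩ := exists_ternary (3*x-2) ⟨by linarith, by linarith⟩
  have hx : IsTernaryExpansion x (tcons 2 a) := by
    have h := isTernary_cons (3*x-2) a 2 (by norm_num) ha
    have he : (((2:ℕ):ℝ) + (3*x-2))/3 = x := by push_cast; ring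
    rwa [he] at h
  rw [hG x ⟨by linarith, by linarith⟩ _ hx, cantorVal_cons_two a ha.1,
    hG (3*x-2) ⟨by linarith, by linarith⟩ a ha]

lemma G_bounds : ∀ x : ℝ, 0 ≤ x → x ≤ 1 → 0 ≤ G x ∧ G x ≤ 1 := by
  intro x h0 h1
  obtain ⟨a, ha⟩ := exists_ternary x ⟨h0, h1⟩
  rw [hG x ⟨h0, h1⟩ a ha]
  exact ⟨cantorVal_nonneg a ha.1, cantorVal_le_one a ha.1⟩

lemma G_one : G 1 = 1 := by
  rw [hG 1 ⟨by norm_num, le_refl 1⟩ _ ternary_one, cantorVal]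
  rw [dif_neg (by push_neg; intro n; norm_num)]
  push_cast
  rw [tsum_two_base]
  norm_num

-- 1/2 ≤ G y for y ∈ [1/3, 1]
lemma G_half_le : ∀ y : ℝ, 1/3 ≤ y → y ≤ 1 → 1/2 ≤ G y := by
  intro y h0 h1
  rcases le_total y (2/3) with h | h
  · rw [G_mid hG y h0 h]
  · rw [G_high hG y h h1]
    have := (G_bounds hG (3*y-2) (by linarith) (by linarith)).1
    linarith

lemma G_le_half : ∀ y : ℝ, 0 ≤ y → y ≤ 2/3 → G y ≤ 1/2 := by
  intro y h0 h1
  rcases le_total y (1/3) with h | h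
  · rw [G_low hG y h0 h]
    have := (G_bounds hG (3*y) (by linarith) (by linarith)).2
    linarith
  · rw [G_mid hG y h h1]

lemma G_mono_aux : ∀ n : ℕ, ∀ x y : ℝ, 0 ≤ x → x ≤ y → y ≤ 1 →
    G x ≤ G y + (1/2)^n := by
  intro n
  induction n with
  | zero =>
    intro x y hx hxy hy
    have h1 := (G_bounds hG x hx (le_trans hxy hy)).2
    have h2 := (G_bounds hG y (le_trans hx hxy) hy).1
    simpa using by linarith
  | succ n ih =>
    intro x y hx hxy hy
    rcases le_total y (1/3) with h | h
    · rw [G_low hG x hx (le_trans hxy h), G_low hG y (le_trans hx hxy) h]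
      have := ih (3*x) (3*y) (by linarith) (by linarith) (by linarith)
      rw [pow_succ]
      linarith
    · rcases le_total (2/3) x with h' | h'
      · rw [G_high hG x h' (le_trans hxy hy), G_high hG y (le_trans h' hxy) hy]
        have := ih (3*x-2) (3*y-2) (by linarith) (by linarith) (by linarith)
        rw [pow_succ]
        linarith
      · -- x ≤ 2/3, 1/3 ≤ y
        have h1 := G_le_half hG x hx h'
        have h2 := G_half_le hG y h (le_trans hx (le_trans hxy hy) |> fun _ => hy)
        have hp : (0:ℝ) < (1/2)^(n+1) := by positivity
        linarith

lemma G_mono : ∀ x y : ℝ, 0 ≤ x → x ≤ y → y ≤ 1 → G x ≤ G y := by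
  intro x y hx hxy hy
  have key : ∀ n : ℕ, G x ≤ G y + (1/2)^n := fun n => G_mono_aux hG n x y hx hxy hy
  by_contra hc
  push_neg at hc
  obtain ⟨n, hn⟩ := exists_pow_lt_of_lt_one (by linarith : (0:ℝ) < G x - G y) (by norm_num : (1/2:ℝ) < 1)
  have := key n
  linarith

lemma G_lb_aux : ∀ n : ℕ, ∀ x : ℝ, 0 ≤ x → x ≤ 1 → 2*x/3 - (1/2)^n ≤ G x := by
  intro n
  induction n with
  | zero =>
    intro x h0 h1
    have := (G_bounds hG x h0 h1).1
    simpa using by linarith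
  | succ n ih =>
    intro x h0 h1
    have hp : (0:ℝ) < (1/2)^(n+1) := by positivity
    rcases le_total x (1/3) with h | h
    · rw [G_low hG x h0 h]
      have := ih (3*x) (by linarith) (by linarith)
      rw [pow_succ]
      linarith
    · rcases le_total x (2/3) with h' | h'
      · rw [G_mid hG x h h']
        linarith
      · rw [G_high hG x h' h1]
        have := ih (3*x-2) (by linarith) (by linarith)
        rw [pow_succ]
        linarith

lemma G_ub_aux : ∀ n : ℕ, ∀ x : ℝ, 0 ≤ x → x ≤ 1 → G x ≤ (2*x+1)/3 + (1/2)^n := by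
  intro n
  induction n with
  | zero =>
    intro x h0 h1
    have := (G_bounds hG x h0 h1).2
    simpa using by linarith
  | succ n ih =>
    intro x h0 h1
    have hp : (0:ℝ) < (1/2)^(n+1) := by positivity
    rcases le_total x (1/3) with h | h
    · rw [G_low hG x h0 h]
      have := ih (3*x) (by linarith) (by linarith)
      rw [pow_succ]
      linarith
    · rcases le_total x (2/3) with h' | h'
      · rw [G_mid hG x h h']
        linarith
      · rw [G_high hG x h' h1]
        have := ih (3*x-2) (by linarith) (by linarith)
        rw [pow_succ]
        linarith

lemma G_lb : ∀ x : ℝ, 0 ≤ x → x ≤ 1 → 2*x/3 ≤ G x := by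
  intro x h0 h1
  have key : ∀ n : ℕ, 2*x/3 - (1/2)^n ≤ G x := fun n => G_lb_aux hG n x h0 h1
  by_contra hc
  push_neg at hc
  obtain ⟨n, hn⟩ := exists_pow_lt_of_lt_one (by linarith : (0:ℝ) < 2*x/3 - G x) (by norm_num : (1/2:ℝ) < 1)
  have := key n
  linarith

lemma G_ub : ∀ x : ℝ, 0 ≤ x → x ≤ 1 → G x ≤ (2*x+1)/3 := by
  intro x h0 h1
  have key : ∀ n : ℕ, G x ≤ (2*x+1)/3 + (1/2)^n := fun n => G_ub_aux hG n x h0 h1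
  by_contra hc
  push_neg at hc
  obtain ⟨n, hn⟩ := exists_pow_lt_of_lt_one (by linarith : (0:ℝ) < G x - (2*x+1)/3) (by norm_num : (1/2:ℝ) < 1)
  have := key n
  linarith

lemma G_ge_id : ∀ x : ℝ, 0 ≤ x → x ≤ 1/2 → x ≤ G x := by
  intro x h0 h1
  rcases le_total x (1/3) with h | h
  · rw [G_low hG x h0 h]
    have := G_lb hG (3*x) (by linarith) (by linarith)
    linarith
  · rw [G_mid hG x h (by linarith)]
    linarith

lemma G_le_id : ∀ x : ℝ, 1/2 ≤ x → x ≤ 1 → G x ≤ x := by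
  intro x h0 h1
  rcases le_total x (2/3) with h | h
  · rw [G_mid hG x (by linarith) h]
    linarith
  · rw [G_high hG x h h1]
    have := G_ub hG (3*x-2) (by linarith) (by linarith)
    linarith

end GProps

section IntProps
variable {G : ℝ → ℝ}
  (hmono : ∀ x y : ℝ, 0 ≤ x → x ≤ y → y ≤ 1 → G x ≤ G y)
  (hlow : ∀ x : ℝ, 0 ≤ x → x ≤ 1/3 → G x = G (3*x)/2)
  (hmid : ∀ x : ℝ, 1/3 ≤ x → x ≤ 2/3 → G x = 1/2)
  (hhigh : ∀ x : ℝ, 2/3 ≤ x → x ≤ 1 → G x = 1/2 + G (3*x-2)/2)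
  (hge : ∀ x : ℝ, 0 ≤ x → x ≤ 1/2 → x ≤ G x)
  (hle : ∀ x : ℝ, 1/2 ≤ x → x ≤ 1 → G x ≤ x)

include hmono in
lemma G_intOn : ∀ a b : ℝ, 0 ≤ a → a ≤ b → b ≤ 1 → IntervalIntegrable G MeasureTheory.volume a b := by
  intro a b h0 hab h1
  apply MonotoneOn.intervalIntegrable
  intro x hx y hy hxy
  rw [uIcc_of_le hab] at hx hy
  exact hmono x y (le_trans h0 hx.1) hxy (le_trans hy.2 h1)

include hmono hlow hmid hhigh in
lemma G_total : ∫ t in (0:ℝ)..1, G t = 1/2 := by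
  set I := ∫ t in (0:ℝ)..1, G t with hI
  have i1 := G_intOn hmono 0 (1/3) (by norm_num) (by norm_num) (by norm_num)
  have i2 := G_intOn hmono (1/3) (2/3) (by norm_num) (by norm_num) (by norm_num)
  have i3 := G_intOn hmono (2/3) 1 (by norm_num) (by norm_num) (by norm_num)
  have hsplit : (∫ t in (0:ℝ)..(1/3), G t) + (∫ t in (1/3:ℝ)..(2/3), G t)
      + (∫ t in (2/3:ℝ)..1, G t) = I := by
    rw [integral_add_adjacent_intervals i1 i2, integral_add_adjacent_intervals
      (i1.trans i2) i3]
  have e1 : (∫ t in (0:ℝ)..(1/3), G t) = 1/6 * I := by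
    have hc : (∫ t in (0:ℝ)..(1/3), G t) = ∫ t in (0:ℝ)..(1/3), G (3*t) / 2 := by
      apply integral_congr
      intro t ht
      rw [uIcc_of_le (by norm_num : (0:ℝ) ≤ 1/3)] at ht
      exact hlow t ht.1 ht.2
    have hcm : (∫ x in (0:ℝ)..(1/3), G (3*x)) = (1/3) * ∫ x in (0:ℝ)..1, G x := by
      rw [integral_comp_mul_left G (by norm_num : (3:ℝ) ≠ 0)]
      norm_num
    rw [hc, integral_div, hcm]
    ring
  have e2 : (∫ t in (1/3:ℝ)..(2/3), G t) = 1/6 := by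
    have hc : (∫ t in (1/3:ℝ)..(2/3), G t) = ∫ t in (1/3:ℝ)..(2/3), (1/2:ℝ) := by
      apply integral_congr
      intro t ht
      rw [uIcc_of_le (by norm_num : (1/3:ℝ) ≤ 2/3)] at ht
      exact hmid t ht.1 ht.2
    rw [hc, integral_const]
    norm_num
  have e3 : (∫ t in (2/3:ℝ)..1, G t) = 1/6 + 1/6 * I := by
    have hmono2 : MonotoneOn (fun t => G (3*t-2)) (uIcc (2/3:ℝ) 1) := by
      intro x hx y hy hxy
      rw [uIcc_of_le (by norm_num : (2/3:ℝ) ≤ 1)] at hx hy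
      exact hmono (3*x-2) (3*y-2) (by linarith [hx.1]) (by linarith) (by linarith [hy.2])
    have j2 : IntervalIntegrable (fun t => G (3*t-2)) MeasureTheory.volume (2/3) 1 :=
      hmono2.intervalIntegrable
    have hc : (∫ t in (2/3:ℝ)..1, G t) = ∫ t in (2/3:ℝ)..1, ((1/2:ℝ) + G (3*t-2) / 2) := by
      apply integral_congr
      intro t ht
      rw [uIcc_of_le (by norm_num : (2/3:ℝ) ≤ 1)] at ht
      exact hhigh t ht.1 ht.2
    rw [hc, integral_add intervalIntegrable_const (j2.div_const 2), integral_const,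
      integral_div]
    have hcm : (∫ x in (2/3:ℝ)..1, G (3*x-2)) = (1/3) * ∫ x in (0:ℝ)..1, G x := by
      rw [integral_comp_mul_sub G (by norm_num : (3:ℝ) ≠ 0) 2]
      norm_num
    rw [hcm]
    norm_num
    ring
  linarith

include hmono hlow hmid hhigh hge hle in
lemma F_ge : ∀ y : ℝ, 0 ≤ y → y ≤ 1 → y^2/2 ≤ ∫ t in (0:ℝ)..y, G t := by
  intro y h0 h1
  rcases le_total y (1/2) with h | h
  · have hint : (∫ t in (0:ℝ)..y, (t:ℝ)) ≤ ∫ t in (0:ℝ)..y, G t := by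
      apply integral_mono_on h0 intervalIntegrable_id
        (G_intOn hmono 0 y (le_refl 0) h0 h1)
      intro t ht
      exact hge t ht.1 (le_trans ht.2 h)
    rw [integral_id] at hint
    norm_num at hint
    linarith
  · have hsplit : (∫ t in (0:ℝ)..y, G t) + (∫ t in (y:ℝ)..1, G t) = ∫ t in (0:ℝ)..1, G t :=
      integral_add_adjacent_intervals (G_intOn hmono 0 y (le_refl 0) h0 h1)
        (G_intOn hmono y 1 h0 h1 (le_refl 1))
    have hint : (∫ t in (y:ℝ)..1, G t) ≤ ∫ t in (y:ℝ)..1, (t:ℝ) := by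
      apply integral_mono_on h1 (G_intOn hmono y 1 h0 h1 (le_refl 1)) intervalIntegrable_id
      intro t ht
      exact hle t (le_trans h ht.1) ht.2
    rw [integral_id] at hint
    rw [G_total hmono hlow hmid hhigh] at hsplit
    nlinarith

end IntProps


/-- **Properties of the stretched Cantor integral.**
With `G` the Cantor function, `g x = G (x / 2π)`, `I_g x = ∫_0^x g`, and
`S_g x = I_g x - x²/(4π) + π`, we have `S_g ≥ π` on `[0, 2π]`,
`S_g 0 = S_g (2π) = π` (equivalently `I_g x ≥ x²/(4π)` on `[0, 2π]` and `I_g (2π) = π`),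
and `x ↦ S_g x + x²/(4π)` is convex on `[0, 2π]`, so `S_g` is semiconvex. -/

theorem cantor_integral_properties
    (G : ℝ → ℝ)
    (hG : ∀ x ∈ Set.Icc (0:ℝ) 1, ∀ a : ℕ → ℕ, IsTernaryExpansion x a → G x = cantorVal a)
    (g Ig Sg : ℝ → ℝ)
    (hg : ∀ x : ℝ, g x = G (x / (2 * Real.pi)))
    (hIg : ∀ x : ℝ, Ig x = ∫ t in (0:ℝ)..x, g t)
    (hSg : ∀ x : ℝ, Sg x = Ig x - x ^ 2 / (4 * Real.pi) + Real.pi) :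
    (∀ x ∈ Set.Icc 0 (2 * Real.pi), Real.pi ≤ Sg x) ∧
    Sg 0 = Real.pi ∧ Sg (2 * Real.pi) = Real.pi ∧
    (∀ x ∈ Set.Icc 0 (2 * Real.pi), x ^ 2 / (4 * Real.pi) ≤ Ig x) ∧
    Ig (2 * Real.pi) = Real.pi ∧
    ConvexOn ℝ (Set.Icc 0 (2 * Real.pi)) (fun x => Sg x + x ^ 2 / (4 * Real.pi)) := by
  have hmono := G_mono hG
  have hlow := G_low hG
  have hmid := G_mid hG
  have hhigh := G_high hG
  have htotal := G_total hmono hlow hmid hhigh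
  have hFge := F_ge hmono hlow hmid hhigh (G_ge_id hG) (G_le_id hG)
  set c : ℝ := 2 * Real.pi with hc
  have hπ : (0:ℝ) < Real.pi := Real.pi_pos
  have hcpos : 0 < c := by rw [hc]; linarith
  have hcne : c ≠ 0 := ne_of_gt hcpos
  -- Ig in terms of F
  have hIg_eq : ∀ x : ℝ, Ig x = c * ∫ u in (0:ℝ)..(x/c), G u := by
    intro x
    rw [hIg]
    have hgg : (∫ t in (0:ℝ)..x, g t) = ∫ t in (0:ℝ)..x, G (t / c) := by
      apply integral_congr
      intro t _
      rw [hg t]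
    rw [hgg, integral_comp_div G hcne, zero_div, smul_eq_mul]
  -- key lower bound
  have key : ∀ x ∈ Set.Icc (0:ℝ) c, x ^ 2 / (4 * Real.pi) ≤ Ig x := by
    intro x hx
    have hy0 : 0 ≤ x / c := div_nonneg hx.1 (le_of_lt hcpos)
    have hy1 : x / c ≤ 1 := (div_le_one hcpos).mpr hx.2
    have := hFge (x/c) hy0 hy1
    rw [hIg_eq x]
    have h2 : c * ((x/c)^2/2) ≤ c * ∫ u in (0:ℝ)..(x/c), G u :=
      mul_le_mul_of_nonneg_left this (le_of_lt hcpos)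
    have h3 : c * ((x/c)^2/2) = x^2/(4*Real.pi) := by
      rw [hc]
      field_simp
      ring
    linarith
  have hIg_total : Ig c = Real.pi := by
    rw [hIg_eq c, div_self hcne, htotal, hc]
    ring
  have hIg0 : Ig 0 = 0 := by
    rw [hIg]
    exact integral_same
  -- monotonicity of g on [0, c]
  have hgmono : ∀ x y : ℝ, 0 ≤ x → x ≤ y → y ≤ c → g x ≤ g y := by
    intro x y h0 hxy h1
    rw [hg x, hg y]
    exact hmono (x/c) (y/c) (div_nonneg h0 (le_of_lt hcpos))
      (by gcongr) ((div_le_one hcpos).mpr h1)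
  have hgint : ∀ a b : ℝ, 0 ≤ a → a ≤ b → b ≤ c →
      IntervalIntegrable g MeasureTheory.volume a b := by
    intro a b h0 hab h1
    apply MonotoneOn.intervalIntegrable
    intro x hx y hy hxy
    rw [uIcc_of_le hab] at hx hy
    exact hgmono x y (le_trans h0 hx.1) hxy (le_trans hy.2 h1)
  -- convexity helper
  have key2 : ∀ x ∈ Set.Icc (0:ℝ) c, ∀ y ∈ Set.Icc (0:ℝ) c, x ≤ y →
      ∀ a b : ℝ, 0 ≤ a → 0 ≤ b → a + b = 1 →
      Ig (a*x + b*y) ≤ a * Ig x + b * Ig y := by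
    intro x hx y hy hxy a b ha hb hab
    set m : ℝ := a*x + b*y with hm
    have h5 : m - x = b*(y-x) := by rw [hm]; linear_combination x * hab
    have h6 : y - m = a*(y-x) := by rw [hm]; linear_combination -y * hab
    have hxm : x ≤ m := by nlinarith [mul_nonneg hb (sub_nonneg.mpr hxy)]
    have hmy : m ≤ y := by nlinarith [mul_nonneg ha (sub_nonneg.mpr hxy)]
    have hm0 : 0 ≤ m := le_trans hx.1 hxm
    have hmc : m ≤ c := le_trans hmy hy.2
    have hIgx : Ig m = Ig x + ∫ t in x..m, g t := by
      have hadj := integral_add_adjacent_intervals (hgint 0 x le_rfl hx.1 hx.2)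
        (hgint x m hx.1 hxm hmc)
      rw [hIg x, hIg m]
      linarith
    have hIgy : Ig y = Ig m + ∫ t in m..y, g t := by
      have hadj := integral_add_adjacent_intervals (hgint 0 m le_rfl hm0 hmc)
        (hgint m y hm0 hmy hy.2)
      rw [hIg y, hIg m]
      linarith
    have b1 : (∫ t in x..m, g t) ≤ (m - x) * g m := by
      have : (∫ t in x..m, g t) ≤ ∫ t in x..m, g m := by
        apply integral_mono_on hxm (hgint x m hx.1 hxm hmc) intervalIntegrable_const
        intro t ht
        exact hgmono t m (le_trans hx.1 ht.1) ht.2 hmc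
      rwa [integral_const, smul_eq_mul] at this
    have b2 : (y - m) * g m ≤ ∫ t in m..y, g t := by
      have : (∫ t in m..y, g m) ≤ ∫ t in m..y, g t := by
        apply integral_mono_on hmy intervalIntegrable_const (hgint m y hm0 hmy hy.2)
        intro t ht
        exact hgmono m t hm0 ht.1 (le_trans ht.2 hy.2)
      rwa [integral_const, smul_eq_mul] at this
    have k1 : a * (∫ t in x..m, g t) ≤ a * ((m-x) * g m) := mul_le_mul_of_nonneg_left b1 ha
    have k2 : b * ((y-m) * g m) ≤ b * (∫ t in m..y, g t) := mul_le_mul_of_nonneg_left b2 hb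
    have k3 : a * ((m-x) * g m) = b * ((y-m) * g m) := by rw [h5, h6]; ring
    have e0 : a * Ig x + b * Ig y =
        Ig m - a * (∫ t in x..m, g t) + b * (∫ t in m..y, g t) := by
      have hx' : Ig x = Ig m - ∫ t in x..m, g t := by linarith
      rw [hx', hIgy]
      linear_combination (Ig m) * hab
    linarith
  -- assemble
  have hconv : ConvexOn ℝ (Set.Icc (0:ℝ) c) Ig := by
    refine ⟨convex_Icc _ _, ?_⟩
    intro x hx y hy a b ha hb hab
    simp only [smul_eq_mul]
    rcases le_total x y with h | h
    · exact key2 x hx y hy h a b ha hb hab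
    · have := key2 y hy x hx h b a hb ha (by linarith)
      rw [show a*x + b*y = b*y + a*x by ring, show a * Ig x + b * Ig y = b * Ig y + a * Ig x by ring]
      exact this
  refine ⟨?_, ?_, ?_, key, hIg_total, ?_⟩
  · intro x hx
    have := key x hx
    rw [hSg x]
    linarith
  · rw [hSg 0, hIg0]
    norm_num
  · rw [hSg c, hIg_total]
    have : c ^ 2 / (4 * Real.pi) = Real.pi := by
      rw [hc]
      field_simp
      ring
    rw [this]
    ring
  · have hfun : (fun x => Sg x + x ^ 2 / (4 * Real.pi)) = fun x => Ig x + Real.pi := by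
      funext x
      rw [hSg x]
      ring
    rw [hfun]
    exact hconv.add_const Real.pi
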